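/- For fixed 0 < x₁ ≤ x₂, the function λ ↦ (1 − e^{−λ x₁})/(1 − e^{−λ x₂}) is monotone non-decreasing on (0,∞). -/

import Mathlib

open Real Set

lemma slope_key {a b : ℝ} (ha : 0 < a) (hab : a ≤ b) :
    b * (Real.exp a - 1) ≤ a * (Real.exp b - 1) := by
  have h := convexOn_exp.secant_mono (a := 0) (x := a) (y := b)
    (Set.mem_univ _) (Set.mem_univ _) (Set.mem_univ _) (ne_of_gt ha)
    (ne_of_gt (lt_of_lt_of_le ha hab)) hab
  simp only [Real.exp_zero, sub_zero] at h
  have hb : 0 < b := lt_of_lt_of_le ha hab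
  rw [div_le_div_iff₀ ha hb] at h
  linarith

lemma num_key (x₁ x₂ l : ℝ) (hx₁ : 0 < x₁) (h12 : x₁ ≤ x₂) (hl : 0 < l) :
    x₂ * Real.exp (-l * x₂) * (1 - Real.exp (-l * x₁)) ≤
      x₁ * Real.exp (-l * x₁) * (1 - Real.exp (-l * x₂)) := by
  have key := slope_key (a := l * x₁) (b := l * x₂) (by positivity)
    (by nlinarith)
  have e1 : Real.exp (-l * x₁) = (Real.exp (l * x₁))⁻¹ := by
    rw [← Real.exp_neg]; ring_nf
  have e2 : Real.exp (-l * x₂) = (Real.exp (l * x₂))⁻¹ := by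
    rw [← Real.exp_neg]; ring_nf
  have p1 : 0 < Real.exp (l * x₁) := Real.exp_pos _
  have p2 : 0 < Real.exp (l * x₂) := Real.exp_pos _
  have h' : x₂ * (Real.exp (l * x₁) - 1) ≤ x₁ * (Real.exp (l * x₂) - 1) := by
    nlinarith [key, hl]
  have q1 : 0 < Real.exp (-l * x₁) := Real.exp_pos _
  have q2 : 0 < Real.exp (-l * x₂) := Real.exp_pos _
  have i1 : Real.exp (l * x₁) * Real.exp (-l * x₁) = 1 := by
    rw [← Real.exp_add]; ring_nf; exact Real.exp_zero
  have i2 : Real.exp (l * x₂) * Real.exp (-l * x₂) = 1 := by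
    rw [← Real.exp_add]; ring_nf; exact Real.exp_zero
  have hm := mul_le_mul_of_nonneg_right h' (le_of_lt (mul_pos q1 q2))
  have eL : x₂ * (Real.exp (l * x₁) - 1) * (Real.exp (-l * x₁) * Real.exp (-l * x₂))
      = x₂ * Real.exp (-l * x₂) * (1 - Real.exp (-l * x₁)) := by
    linear_combination (x₂ * Real.exp (-l * x₂)) * i1
  have eR : x₁ * (Real.exp (l * x₂) - 1) * (Real.exp (-l * x₁) * Real.exp (-l * x₂))
      = x₁ * Real.exp (-l * x₁) * (1 - Real.exp (-l * x₂)) := by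
    linear_combination (x₁ * Real.exp (-l * x₁)) * i2
  rw [← eL, ← eR]
  exact hm

/-- For `0 < x₁ ≤ x₂`, the ratio of exponential CDFs
`λ ↦ (1 − e^{−λx₁})/(1 − e^{−λx₂})` is non-decreasing on `(0, ∞)`. -/
theorem exponential_cdf_ratio_monotone
    (x₁ x₂ : ℝ) (hx₁ : 0 < x₁) (h12 : x₁ ≤ x₂) :
    MonotoneOn
      (fun l : ℝ => (1 - Real.exp (-l * x₁)) / (1 - Real.exp (-l * x₂)))
      (Set.Ioi (0:ℝ)) := by
  have hx₂ : 0 < x₂ := lt_of_lt_of_le hx₁ h12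
  -- denominator positive on Ioi 0
  have hden : ∀ l : ℝ, l ∈ Set.Ioi (0:ℝ) → 0 < 1 - Real.exp (-l * x₂) := by
    intro l hl
    have : Real.exp (-l * x₂) < 1 := by
      rw [Real.exp_lt_one_iff]
      have : 0 < l := hl
      nlinarith
    linarith
  have hderiv : ∀ l : ℝ, l ∈ Set.Ioi (0:ℝ) →
      HasDerivAt (fun l : ℝ => (1 - Real.exp (-l * x₁)) / (1 - Real.exp (-l * x₂)))
        ((x₁ * Real.exp (-l * x₁) * (1 - Real.exp (-l * x₂)) -
          (1 - Real.exp (-l * x₁)) * (x₂ * Real.exp (-l * x₂))) /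
          (1 - Real.exp (-l * x₂))^2) l := by
    intro l hl
    have h1 : HasDerivAt (fun l : ℝ => 1 - Real.exp (-l * x₁))
        (x₁ * Real.exp (-l * x₁)) l := by
      have : HasDerivAt (fun l : ℝ => -l * x₁) (-x₁) l := by
        simpa using ((hasDerivAt_id l).neg.mul_const x₁)
      have := (this.exp).const_sub 1
      exact this.congr_deriv (by ring)
    have h2 : HasDerivAt (fun l : ℝ => 1 - Real.exp (-l * x₂))
        (x₂ * Real.exp (-l * x₂)) l := by
      have : HasDerivAt (fun l : ℝ => -l * x₂) (-x₂) l := by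
        simpa using ((hasDerivAt_id l).neg.mul_const x₂)
      have := (this.exp).const_sub 1
      exact this.congr_deriv (by ring)
    exact h1.div h2 (ne_of_gt (hden l hl))
  have hint : interior (Set.Ioi (0:ℝ)) = Set.Ioi (0:ℝ) := interior_Ioi
  apply monotoneOn_of_deriv_nonneg (convex_Ioi 0)
  · intro l hl
    exact ((hderiv l hl).continuousAt).continuousWithinAt
  · rw [hint]
    intro l hl
    exact ((hderiv l hl).differentiableAt).differentiableWithinAt
  · rw [hint]
    intro l hl
    rw [(hderiv l hl).deriv]
    apply div_nonneg _ (sq_nonneg _)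
    have := num_key x₁ x₂ l hx₁ h12 hl
    nlinarith [num_key x₁ x₂ l hx₁ h12 hl]
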